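/- Let f = f_{β,E} be a post-critically finite generalized β-transformation (so β is an algebraic number). If z ∈ ℂ is a Galois conjugate of β with |z| > 1, then Σ_{j=0}^∞ c_j z^{−j} = 0, where c_0 = 1 and c_j = s(j+1)·f^j(1) ∈ [−1,1] for j ≥ 1. In particular, z^{−1} belongs to 𝓖, the set of zeros of functions in the class 𝓕. -/

import Mathlib

open Finset

/-- The index `k` such that `x ∈ I_k`, where `I_0 = [0, 1/β]`,
`I_k = (k/β, (k+1)/β]` for `1 ≤ k ≤ m-1` and `I_m = (m/β, 1]`. -/
noncomputable def branchIdx (β x : ℝ) : ℕ := (⌈β * x⌉ - 1).toNat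

/-- The generalized β-transformation `f_{β,E}`, where `E` records the signs of the branches. -/
noncomputable def gbeta (β : ℝ) (E : ℕ → ℤ) (x : ℝ) : ℝ :=
  if E (branchIdx β x) = 1 then β * x - branchIdx β x
  else -(β * x) + branchIdx β x + 1

/-- The sign `e(j)` of the branch containing `f^{j-1}(1)`. -/
noncomputable def esign (β : ℝ) (E : ℕ → ℤ) (j : ℕ) : ℤ :=
  E (branchIdx β ((gbeta β E)^[j - 1] 1))

/-- The cumulative sign `s(j)`, with `s(1) = 1` and `s(j+1) = e(j)·s(j)`. -/
noncomputable def csign (β : ℝ) (E : ℕ → ℤ) (j : ℕ) : ℤ :=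
  ∏ l ∈ Finset.Ico 1 j, esign β E l

/-- The digit `d(j)` of the (β,E)-expansion of 1. -/
noncomputable def digit (β : ℝ) (E : ℕ → ℤ) (j : ℕ) : ℕ :=
  if E (branchIdx β ((gbeta β E)^[j - 1] 1)) = 1
  then branchIdx β ((gbeta β E)^[j - 1] 1)
  else branchIdx β ((gbeta β E)^[j - 1] 1) + 1

/-- The signed orbit `c_j = s(j+1)·f^j(1)`, with `c_0 = 1`. -/
noncomputable def sorbit (β : ℝ) (E : ℕ → ℤ) (j : ℕ) : ℝ :=
  (csign β E (j + 1) : ℝ) * (gbeta β E)^[j] 1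

/-- The data `(m, β, E)` is valid for a generalized β-transformation:
`m ≥ 1`, `β ∈ (m, m+1]` and `E(0), …, E(m) ∈ {1, -1}`. -/
def IsGBetaValid (m : ℕ) (β : ℝ) (E : ℕ → ℤ) : Prop :=
  1 ≤ m ∧ (m : ℝ) < β ∧ β ≤ m + 1 ∧ ∀ k ≤ m, E k = 1 ∨ E k = -1

/-- `f_{β,E}` is post-critically finite: the orbit of `1` is finite. -/
def IsPCF (β : ℝ) (E : ℕ → ℤ) : Prop :=
  Set.Finite {x : ℝ | ∃ j : ℕ, (gbeta β E)^[j] 1 = x}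

/-- `β > 1` is a generalized Parry number if some `f_{β,E}` is post-critically finite. -/
def IsGenParry (β : ℝ) : Prop :=
  1 < β ∧ ∃ (m : ℕ) (E : ℕ → ℤ), IsGBetaValid m β E ∧ IsPCF β E

/-- `z` is a Galois conjugate of `β`: a root of the minimal polynomial of `β` over `ℚ`
different from `β` itself. -/
def IsGaloisConj (z : ℂ) (β : ℝ) : Prop :=
  z ≠ (β : ℂ) ∧ Polynomial.aeval z (minpoly ℚ β) = 0

/-- `Ω`: the set of all Galois conjugates of all generalized Parry numbers. -/
def OmegaSet : Set ℂ := {z : ℂ | ∃ β : ℝ, IsGenParry β ∧ IsGaloisConj z β}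

/-- `𝓖`: the set of zeros in the open unit disk of functions
`T(w) = 1 + Σ_{j≥1} a_j w^j` with coefficients `a_j ∈ [-1,1]` (the class `𝓕`). -/
def mathcalG : Set ℂ :=
  {l : ℂ | ‖l‖ < 1 ∧ ∃ a : ℕ → ℝ, (∀ j : ℕ, a (j + 1) ∈ Set.Icc (-1 : ℝ) 1) ∧
    1 + ∑' j : ℕ, (a (j + 1) : ℂ) * l ^ (j + 1) = 0}

/-- The itinerary data `It(j)` associated to a finite sequence `(s(j), a(j))_{j=1}^n`. -/
def ItSeq (n : ℕ) (s : ℕ → ℤ) (a : ℕ → ℕ) (j : ℕ) : ℕ :=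
  if j = n then a n else if s (j + 1) = s j then a j else a j - 1

/-- The tail sum `R_j(x) = Σ_{i=j}^{n-1} s(i+1) a(i+1) x^{-i}`. -/
noncomputable def RSum (n : ℕ) (s : ℕ → ℤ) (a : ℕ → ℕ) (j : ℕ) (x : ℝ) : ℝ :=
  ∑ i ∈ Finset.Ico j n, (s (i + 1) : ℝ) * (a (i + 1) : ℝ) * x ^ (-(i : ℤ))

/-- `x ∈ I_k`, for the partition of `[0,1]` into
`I_0 = [0, 1/β]`, `I_k = (k/β, (k+1)/β]` for `1 ≤ k ≤ m-1`, `I_m = (m/β, 1]`. -/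
def memI (β : ℝ) (m k : ℕ) (x : ℝ) : Prop :=
  if k = 0 then x ∈ Set.Icc (0 : ℝ) (1 / β)
  else if k = m then x ∈ Set.Ioc ((m : ℝ) / β) 1
  else x ∈ Set.Ioc ((k : ℝ) / β) (((k : ℝ) + 1) / β)

lemma branchIdx_le (m : ℕ) (β x : ℝ) (hm : (1:ℝ) ≤ m) (hβ : (m:ℝ) < β) (hβ' : β ≤ m + 1)
    (hx : x ∈ Set.Icc (0:ℝ) 1) : branchIdx β x ≤ m := by
  have hβ0 : (0:ℝ) < β := lt_of_le_of_lt (by linarith) hβ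
  have h1 : β * x ≤ (m:ℝ) + 1 := by nlinarith [hx.1, hx.2]
  have : ⌈β * x⌉ ≤ (m:ℤ) + 1 := by
    rw [Int.ceil_le]; push_cast; linarith
  unfold branchIdx; omega

lemma branchIdx_bounds (β x : ℝ) (hβ0 : (0:ℝ) < β) (hx : 0 ≤ x) :
    (branchIdx β x : ℝ) ≤ β * x ∧ β * x ≤ branchIdx β x + 1 := by
  have h0 : 0 ≤ β * x := mul_nonneg hβ0.le hx
  rcases eq_or_lt_of_le h0 with h | h
  · have : ⌈β * x⌉ = 0 := by rw [← h]; simp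
    unfold branchIdx
    rw [this]
    simp [← h]
  · have hc1 : (0:ℤ) < ⌈β * x⌉ := Int.ceil_pos.mpr h
    have hk : ((branchIdx β x : ℕ) : ℤ) = ⌈β * x⌉ - 1 := by unfold branchIdx; omega
    constructor
    · have := Int.ceil_lt_add_one (β * x)
      have : ((⌈β * x⌉ : ℤ) : ℝ) - 1 < β * x + 1 - 1 := by push_cast at this ⊢; linarith
      have hle : ((branchIdx β x : ℕ) : ℝ) = ((⌈β * x⌉ : ℤ) : ℝ) - 1 := by
        rw [← Int.cast_natCast, hk]; push_cast; ring
      rw [hle]; linarith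
    · have h2 := Int.le_ceil (β * x)
      have hle : ((branchIdx β x : ℕ) : ℝ) = ((⌈β * x⌉ : ℤ) : ℝ) - 1 := by
        rw [← Int.cast_natCast, hk]; push_cast; ring
      rw [hle]; push_cast at h2 ⊢; linarith

/-- digit value as natural number for a point x -/
noncomputable def dval (β : ℝ) (E : ℕ → ℤ) (x : ℝ) : ℕ :=
  if E (branchIdx β x) = 1 then branchIdx β x else branchIdx β x + 1

lemma gbeta_step (m : ℕ) (β : ℝ) (E : ℕ → ℤ) (hv : IsGBetaValid m β E)
    (x : ℝ) (hx : x ∈ Set.Icc (0:ℝ) 1) :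
    gbeta β E x ∈ Set.Icc (0:ℝ) 1 ∧
    (E (branchIdx β x) : ℝ) * gbeta β E x = β * x - (dval β E x : ℝ) ∧
    (E (branchIdx β x) = 1 ∨ E (branchIdx β x) = -1) ∧
    dval β E x ≤ m + 1 := by
  obtain ⟨hm, hβ, hβ', hE⟩ := hv
  have hm1 : (1:ℝ) ≤ m := by exact_mod_cast hm
  have hβ0 : (0:ℝ) < β := by linarith
  have hb := branchIdx_bounds β x hβ0 hx.1
  have hk : branchIdx β x ≤ m := branchIdx_le m β x hm1 hβ hβ' hx
  have hEk := hE _ hk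
  rcases hEk with h1 | h1
  · refine ⟨?_, ?_, Or.inl h1, ?_⟩
    · simp only [gbeta, h1, if_pos]
      constructor <;> [linarith [hb.1]; linarith [hb.2]]
    · simp only [gbeta, dval, h1, if_pos]
      push_cast; ring
    · simp only [dval, h1, if_pos]; omega
  · have h2 : ¬ (E (branchIdx β x) = 1) := by rw [h1]; decide
    refine ⟨?_, ?_, Or.inr h1, ?_⟩
    · simp only [gbeta, h2, if_neg, if_false]
      constructor <;> [linarith [hb.2]; linarith [hb.1]]
    · simp only [gbeta, dval, h2, if_neg, if_false, h1]
      push_cast; ring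
    · simp only [dval, h2, if_neg, if_false]; omega

section main
variable (m : ℕ) (β : ℝ) (E : ℕ → ℤ)

noncomputable def xo (j : ℕ) : ℝ := (gbeta β E)^[j] 1
noncomputable def useq (j : ℕ) : ℤ := csign β E j * digit β E j

variable (hv : IsGBetaValid m β E)
include hv

lemma xo_mem : ∀ j, xo β E j ∈ Set.Icc (0:ℝ) 1 := by
  intro j
  induction j with
  | zero => simp [xo]
  | succ n ih =>
      have : xo β E (n+1) = gbeta β E (xo β E n) := by
        simp [xo, Function.iterate_succ_apply']
      rw [this]
      exact (gbeta_step m β E hv _ ih).1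

omit hv in
lemma digit_eq (j : ℕ) : digit β E (j + 1) = dval β E (xo β E j) := by
  simp only [digit, dval, xo, Nat.add_sub_cancel]
  split_ifs <;> simp_all

omit hv in
lemma esign_eq (j : ℕ) : esign β E (j + 1) = E (branchIdx β (xo β E j)) := by
  simp [esign, xo]

lemma esign_pm (j : ℕ) : esign β E (j + 1) = 1 ∨ esign β E (j + 1) = -1 := by
  rw [esign_eq β E]
  exact (gbeta_step m β E hv _ (xo_mem m β E hv j)).2.2.1

omit hv in
lemma csign_succ (j : ℕ) : csign β E (j + 2) = csign β E (j + 1) * esign β E (j + 1) := by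
  unfold csign
  rw [Finset.prod_Ico_succ_top (by omega : 1 ≤ j + 1)]

lemma csign_pm : ∀ j, csign β E (j+1) = 1 ∨ csign β E (j+1) = -1 := by
  intro j
  induction j with
  | zero => left; simp [csign]
  | succ n ih =>
      rw [csign_succ β E]
      rcases ih with h | h <;> rcases esign_pm m β E hv n with h' | h' <;>
        simp [h, h']

omit hv in
lemma sorbit_zero : sorbit β E 0 = 1 := by
  simp [sorbit, csign]

lemma sorbit_succ (j : ℕ) :
    sorbit β E (j + 1) = β * sorbit β E j - (useq β E (j + 1) : ℝ) := by
  have hx : xo β E (j+1) = gbeta β E (xo β E j) := by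
    simp [xo, Function.iterate_succ_apply']
  have hstep := (gbeta_step m β E hv _ (xo_mem m β E hv j)).2.1
  have : sorbit β E (j+1) = (csign β E (j+1) : ℝ) * ((E (branchIdx β (xo β E j)) : ℝ) * gbeta β E (xo β E j)) := by
    show (csign β E (j+2) : ℝ) * (gbeta β E)^[j+1] 1 = _
    rw [csign_succ β E, esign_eq β E]
    push_cast
    rw [show ((gbeta β E)^[j+1] 1) = gbeta β E (xo β E j) from hx]
    ring
  rw [this, hstep, useq, digit_eq β E]
  have : sorbit β E j = (csign β E (j+1) : ℝ) * xo β E j := rfl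
  rw [this]
  push_cast
  have hc := csign_pm m β E hv j
  rcases hc with h | h <;> rw [h] <;> push_cast <;> ring

lemma sorbit_mem (j : ℕ) : sorbit β E j ∈ Set.Icc (-1:ℝ) 1 := by
  have hx := xo_mem m β E hv j
  have hc := csign_pm m β E hv j
  have : sorbit β E j = (csign β E (j+1) : ℝ) * xo β E j := rfl
  rw [this]
  rcases hc with h | h <;> rw [h] <;> push_cast <;>
    constructor <;> linarith [hx.1, hx.2]

lemma useq_bound (j : ℕ) : |useq β E (j+1)| ≤ m + 1 := by
  have hd : digit β E (j+1) ≤ m + 1 := by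
    rw [digit_eq β E]
    exact (gbeta_step m β E hv _ (xo_mem m β E hv j)).2.2.2
  have hc := csign_pm m β E hv j
  unfold useq
  rcases hc with h | h <;> rw [h] <;> simp <;> exact_mod_cast hd

end main

noncomputable def Gpow {K : Type*} [Field K] (u : ℕ → ℤ) (w : K) (n : ℕ) : K :=
  w ^ n - ∑ i ∈ Finset.Icc 1 n, (u i : K) * w ^ (n - i)

lemma Gpow_succ {K : Type*} [Field K] (u : ℕ → ℤ) (w : K) (n : ℕ) :
    Gpow u w (n + 1) = w * Gpow u w n - (u (n+1) : K) := by
  unfold Gpow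
  rw [Finset.sum_Icc_succ_top (by omega : 1 ≤ n + 1)]
  rw [mul_sub, Finset.mul_sum]
  have h1 : ∀ i ∈ Finset.Icc 1 n, (u i : K) * w ^ (n + 1 - i) = w * ((u i : K) * w ^ (n - i)) := by
    intro i hi
    rw [Finset.mem_Icc] at hi
    rw [show n + 1 - i = (n - i) + 1 by omega]
    ring
  rw [Finset.sum_congr rfl h1]
  simp [pow_succ]
  ring

section main2
variable (m : ℕ) (β : ℝ) (E : ℕ → ℤ) (hv : IsGBetaValid m β E)
include hv

lemma Gpow_beta (n : ℕ) : Gpow (useq β E) β n = sorbit β E n := by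
  induction n with
  | zero => simp [Gpow, sorbit_zero β E]
  | succ k ih => rw [Gpow_succ, ih, sorbit_succ m β E hv]

end main2

/-- the transfer polynomial -/
noncomputable def Ppoly (u : ℕ → ℤ) (p q : ℕ) : Polynomial ℚ :=
  (Polynomial.X ^ (p+q) - ∑ i ∈ Finset.Icc 1 (p+q), Polynomial.C ((u i : ℚ)) * Polynomial.X ^ (p+q-i))
  - (Polynomial.X ^ p - ∑ i ∈ Finset.Icc 1 p, Polynomial.C ((u i : ℚ)) * Polynomial.X ^ (p-i))

lemma aeval_Ppoly {K : Type*} [Field K] [Algebra ℚ K] (u : ℕ → ℤ) (p q : ℕ) (w : K) :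
    Polynomial.aeval w (Ppoly u p q) = Gpow u w (p+q) - Gpow u w p := by
  unfold Ppoly Gpow
  simp [Polynomial.aeval_def, Polynomial.eval₂_sub, Polynomial.eval₂_finset_sum,
    map_sub, map_sum, map_pow, map_mul]

section per
variable (β : ℝ) (E : ℕ → ℤ)

lemma xo_csign_det {a b : ℕ} (hx : xo β E a = xo β E b) (hs : csign β E (a+1) = csign β E (b+1)) :
    ∀ j, xo β E (a+j) = xo β E (b+j) ∧ csign β E (a+j+1) = csign β E (b+j+1) := by
  intro j
  induction j with
  | zero => exact ⟨hx, hs⟩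
  | succ k ih =>
      constructor
      · have h1 : xo β E (a+(k+1)) = gbeta β E (xo β E (a+k)) := by
          simp [xo, ← Nat.add_assoc, Function.iterate_succ_apply']
        have h2 : xo β E (b+(k+1)) = gbeta β E (xo β E (b+k)) := by
          simp [xo, ← Nat.add_assoc, Function.iterate_succ_apply']
        rw [h1, h2, ih.1]
      · have h1 : csign β E (a+(k+1)+1) = csign β E (a+k+1) * esign β E (a+k+1) := by
          rw [show a+(k+1)+1 = (a+k)+2 by ring, csign_succ β E]
        have h2 : csign β E (b+(k+1)+1) = csign β E (b+k+1) * esign β E (b+k+1) := by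
          rw [show b+(k+1)+1 = (b+k)+2 by ring, csign_succ β E]
        rw [h1, h2, ih.2, esign_eq β E, esign_eq β E, ih.1]

lemma exists_period (m : ℕ) (hv : IsGBetaValid m β E) (hpcf : IsPCF β E) :
    ∃ p q : ℕ, 0 < q ∧
      (∀ j, sorbit β E (p+j) = sorbit β E (p+q+j)) ∧
      (∀ j, useq β E (p+j+1) = useq β E (p+q+j+1)) := by
  classical
  set O := {x : ℝ | ∃ j : ℕ, (gbeta β E)^[j] 1 = x}
  have hfin : Set.Finite (O ×ˢ ({1, -1} : Set ℤ) : Set (ℝ × ℤ)) :=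
    Set.Finite.prod hpcf ((Set.finite_singleton _).insert _)
  have hmaps : Set.MapsTo (fun j : ℕ => (xo β E j, csign β E (j+1))) Set.univ
      (O ×ˢ ({1, -1} : Set ℤ)) := by
    intro j _
    refine ⟨⟨j, rfl⟩, ?_⟩
    rcases csign_pm m β E hv j with h | h <;> simp [h]
  obtain ⟨a, -, b, -, hne, heq⟩ :=
    Set.infinite_univ.exists_ne_map_eq_of_mapsTo hmaps hfin
  simp only [Prod.mk.injEq] at heq
  rcases Nat.lt_or_ge a b with hab | hab
  · refine ⟨a, b - a, by omega, ?_, ?_⟩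
    all_goals {
      have hdet := xo_csign_det β E heq.1 heq.2
      intro j
      have hb : a + (b - a) + j = b + j := by omega
      have h1 := (hdet j).1
      have h2 := (hdet j).2
      first
      | · show (csign β E (a+j+1) : ℝ) * xo β E (a+j) = (csign β E (a+(b-a)+j+1) : ℝ) * xo β E (a+(b-a)+j)
          rw [hb, h1, h2]
      | · unfold useq
          rw [hb, (xo_csign_det β E heq.1 heq.2 j).2,
            show a+j+1 = (a+j)+1 from rfl, show b+j+1 = (b+j)+1 from rfl,
            digit_eq β E, digit_eq β E, h1]
    }
  · have hba : b < a := by omega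
    refine ⟨b, a - b, by omega, ?_, ?_⟩
    all_goals {
      have hdet := xo_csign_det β E heq.1.symm heq.2.symm
      intro j
      have hb : b + (a - b) + j = a + j := by omega
      have h1 := (hdet j).1
      have h2 := (hdet j).2
      first
      | · show (csign β E (b+j+1) : ℝ) * xo β E (b+j) = (csign β E (b+(a-b)+j+1) : ℝ) * xo β E (b+(a-b)+j)
          rw [hb, h1, h2]
      | · unfold useq
          rw [hb, h2,
            show b+j+1 = (b+j)+1 from rfl, show a+j+1 = (a+j)+1 from rfl,
            digit_eq β E, digit_eq β E, h1]
    }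

end per

section gamma
variable (u : ℕ → ℤ) (z : ℂ) (p q : ℕ)

lemma gamma_per (hper : ∀ j, u (p+j+1) = u (p+q+j+1))
    (hpq : Gpow u z (p+q) = Gpow u z p) :
    ∀ j, Gpow u z (p+q+j) = Gpow u z (p+j) := by
  intro j
  induction j with
  | zero => simpa using hpq
  | succ k ih =>
      have h1 : p+q+(k+1) = (p+q+k)+1 := by ring
      have h2 : p+(k+1) = (p+k)+1 := by ring
      rw [h1, h2, Gpow_succ, Gpow_succ, ih, ← hper k]

lemma gamma_bounded (hq : 0 < q) (hper : ∀ j, u (p+j+1) = u (p+q+j+1))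
    (hpq : Gpow u z (p+q) = Gpow u z p) :
    ∃ C : ℝ, ∀ n, ‖Gpow u z n‖ ≤ C := by
  have hrep : ∀ n, ∃ k ≤ p + q, Gpow u z n = Gpow u z k := by
    intro n
    induction n using Nat.strong_induction_on with
    | _ n ih =>
      rcases le_or_gt n (p+q) with h | h
      · exact ⟨n, h, rfl⟩
      · have h1 : n = p + q + (n - p - q) := by omega
        have h2 := gamma_per u z p q hper hpq (n - p - q)
        have h3 : p + (n - p - q) < n := by omega
        obtain ⟨k, hk, hk2⟩ := ih _ h3
        exact ⟨k, hk, by rw [h1, h2, hk2]⟩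
  refine ⟨∑ i ∈ Finset.range (p+q+1), ‖Gpow u z i‖, fun n => ?_⟩
  obtain ⟨k, hk, hk2⟩ := hrep n
  rw [hk2]
  exact Finset.single_le_sum (f := fun i => ‖Gpow u z i‖) (fun i _ => norm_nonneg _)
    (Finset.mem_range.mpr (by omega))

end gamma


/-- If `f_{β,E}` is a post-critically finite generalized β-transformation and `z`
is a Galois conjugate of `β` with `|z| > 1`, then each `c_j ∈ [-1,1]`,
`Σ_{j=0}^∞ c_j z^{−j} = 0`, and `z⁻¹ ∈ 𝓖`. -/
theorem stmt4 (m : ℕ) (β : ℝ) (E : ℕ → ℤ) (hv : IsGBetaValid m β E) (hpcf : IsPCF β E)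
    (z : ℂ) (hconj : IsGaloisConj z β) (hz : 1 < ‖z‖) :
    (∀ j : ℕ, sorbit β E j ∈ Set.Icc (-1 : ℝ) 1) ∧
    (∑' j : ℕ, (sorbit β E j : ℂ) * z ^ (-(j : ℤ)) = 0) ∧
    z⁻¹ ∈ mathcalG := by
  classical
  set u : ℕ → ℤ := useq β E with hu
  obtain ⟨p, q, hq, hsper, huper⟩ := exists_period β E m hv hpcf
  have hz0 : z ≠ 0 := by
    intro h; rw [h] at hz; simp at hz; linarith
  set r : ℝ := ‖z‖⁻¹ with hr
  have hr0 : 0 ≤ r := by positivity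
  have hr1 : r < 1 := by
    rw [hr, inv_lt_one_iff₀]; right; exact hz
  -- transfer the periodicity relation to z
  have hβeq : Polynomial.aeval β (Ppoly u p q) = 0 := by
    rw [aeval_Ppoly, Gpow_beta m β E hv, Gpow_beta m β E hv]
    have := hsper 0
    simp only [Nat.add_zero] at this
    rw [this, sub_self]
  have hdvd : minpoly ℚ β ∣ Ppoly u p q := minpoly.dvd ℚ β hβeq
  have hzeq : Polynomial.aeval z (Ppoly u p q) = 0 := by
    obtain ⟨Q, hQ⟩ := hdvd
    rw [hQ, map_mul, hconj.2, zero_mul]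
  have hpq : Gpow u z (p+q) = Gpow u z p := by
    have := hzeq
    rw [aeval_Ppoly] at this
    exact sub_eq_zero.mp this
  have huper' : ∀ j, u (p+j+1) = u (p+q+j+1) := fun j => huper j
  obtain ⟨C, hC⟩ := gamma_bounded u z p q hq huper' hpq
  -- the u-series
  set v : ℕ → ℂ := fun i => (u (i+1) : ℂ) * z ^ (-(i+1 : ℕ) : ℤ) with hv'
  have hpart : ∀ N, Gpow u z N * z ^ (-(N:ℤ)) = 1 - ∑ i ∈ Finset.range N, v i := by
    intro N
    induction N with
    | zero => simp [Gpow]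
    | succ k ih =>
        rw [Finset.sum_range_succ, Gpow_succ]
        have hzp : z ^ (-(k+1 : ℕ) : ℤ) = z ^ (-(k:ℤ)) * z⁻¹ := by
          rw [← zpow_neg_one, ← zpow_add₀ hz0]
          congr 1; push_cast; ring
        rw [sub_mul, hzp, show z * Gpow u z k * (z ^ (-(k:ℤ)) * z⁻¹)
            = Gpow u z k * z ^ (-(k:ℤ)) * (z * z⁻¹) by ring, mul_inv_cancel₀ hz0, mul_one, ih]
        have hvk : v k = (u (k+1) : ℂ) * (z ^ (-(k:ℤ)) * z⁻¹) := by rw [hv']; simp only; rw [hzp]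
        rw [hvk]
        ring
  have hnormz : ∀ n : ℕ, ‖z ^ (-(n:ℤ))‖ = r ^ n := by
    intro n
    rw [norm_zpow, zpow_neg, zpow_natCast, ← inv_pow]
  have hvsum : Summable v := by
    apply Summable.of_norm_bounded (g := fun i => ((m:ℝ)+1) * r ^ i)
      (((summable_geometric_of_lt_one hr0 hr1).mul_left _))
    intro i
    rw [hv', norm_mul, hnormz (i+1)]
    have h1 : ‖((u (i+1) : ℂ))‖ ≤ (m:ℝ) + 1 := by
      rw [Complex.norm_intCast]
      have := useq_bound m β E hv i
      have : |(u (i+1) : ℝ)| ≤ ((m:ℤ)+1 : ℝ) := by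
        exact_mod_cast (by exact_mod_cast this : |(u (i+1) : ℝ)| ≤ ((m+1 : ℤ) : ℝ))
      push_cast at this ⊢
      exact this
    have h2 : r ^ (i+1) ≤ r ^ i := by
      apply pow_le_pow_of_le_one hr0 hr1.le; omega
    calc ‖((u (i+1) : ℂ))‖ * r ^ (i+1) ≤ ((m:ℝ)+1) * r ^ (i+1) := by
          apply mul_le_mul_of_nonneg_right h1 (by positivity)
      _ ≤ ((m:ℝ)+1) * r ^ i := by
          apply mul_le_mul_of_nonneg_left h2 (by positivity)
  have hvlim : HasSum v 1 := by
    have h1 := hvsum.hasSum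
    have h2 := h1.tendsto_sum_nat
    have h3 : Filter.Tendsto (fun N => ∑ i ∈ Finset.range N, v i) Filter.atTop (nhds 1) := by
      have h4 : (fun N => ∑ i ∈ Finset.range N, v i)
          = fun N => 1 - Gpow u z N * z ^ (-(N:ℤ)) := by
        funext N; rw [hpart N]; ring
      rw [h4]
      have h5 : Filter.Tendsto (fun N : ℕ => Gpow u z N * z ^ (-(N:ℤ))) Filter.atTop (nhds 0) := by
        have hgeo : Filter.Tendsto (fun N : ℕ => C * r ^ N) Filter.atTop (nhds 0) := by
          simpa using (tendsto_pow_atTop_nhds_zero_of_lt_one hr0 hr1).const_mul C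
        refine squeeze_zero_norm (fun N => ?_) hgeo
        rw [norm_mul, hnormz N]
        exact mul_le_mul_of_nonneg_right (hC N) (by positivity)
      simpa using (tendsto_const_nhds (x := (1:ℂ))).sub h5
    have h6 : ∑' i, v i = 1 := tendsto_nhds_unique h2 h3
    exact h6 ▸ h1
  -- the c-series
  set Cs : ℕ → ℂ := fun j => ((sorbit β E j : ℝ) : ℂ) * z ^ (-(j:ℤ)) with hCs
  have hCbound : ∀ j, ‖Cs j‖ ≤ r ^ j := by
    intro j
    rw [hCs, norm_mul, hnormz j]
    have := sorbit_mem m β E hv j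
    have h1 : ‖((sorbit β E j : ℝ) : ℂ)‖ ≤ 1 := by
      rw [Complex.norm_real]
      rw [Real.norm_eq_abs, abs_le]
      exact ⟨this.1, this.2⟩
    nlinarith [pow_nonneg hr0 j, norm_nonneg ((sorbit β E j : ℝ) : ℂ)]
  have hCsummable : Summable Cs :=
    Summable.of_norm_bounded (summable_geometric_of_lt_one hr0 hr1) hCbound
  have hS := hCsummable.hasSum
  set S : ℂ := ∑' j, Cs j with hSdef
  have hCs0 : Cs 0 = 1 := by
    rw [hCs]; simp [sorbit_zero β E]
  have hshift : HasSum (fun j => Cs (j+1)) (S - 1) := by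
    have heq : S - 1 + ∑ i ∈ Finset.range 1, Cs i = S := by simp [hCs0]
    rw [hasSum_nat_add_iff 1, heq]
    exact hS
  have hident : (fun j => Cs (j+1)) = fun j => ((β:ℂ) * z⁻¹) * Cs j - v j := by
    funext j
    have hrec := sorbit_succ m β E hv j
    have hzp : z ^ (-(j+1 : ℕ) : ℤ) = z ^ (-(j:ℤ)) * z⁻¹ := by
      rw [← zpow_neg_one, ← zpow_add₀ hz0]
      congr 1; push_cast; ring
    show ((sorbit β E (j+1) : ℝ) : ℂ) * z ^ (-(j+1:ℕ) : ℤ)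
      = ((β:ℂ) * z⁻¹) * (((sorbit β E j : ℝ) : ℂ) * z ^ (-(j:ℤ))) - (u (j+1) : ℂ) * z ^ (-(j+1:ℕ) : ℤ)
    rw [hrec, hzp]
    push_cast
    ring
  have hother : HasSum (fun j => ((β:ℂ) * z⁻¹) * Cs j - v j) (((β:ℂ) * z⁻¹) * S - 1) :=
    (hS.mul_left _).sub hvlim
  have hother2 : HasSum (fun j => Cs (j+1)) (((β:ℂ) * z⁻¹) * S - 1) := by
    rw [hident]; exact hother
  have hSeq : S - 1 = ((β:ℂ) * z⁻¹) * S - 1 := hshift.unique hother2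
  have hS0 : S = 0 := by
    have h2 : (1 - (β:ℂ) * z⁻¹) * S = 0 := by linear_combination hSeq
    rcases mul_eq_zero.mp h2 with h | h
    · exfalso
      have h3 : (β:ℂ) * z⁻¹ = 1 := by linear_combination -h
      field_simp at h3
      exact hconj.1 h3.symm
    · exact h
  refine ⟨fun j => sorbit_mem m β E hv j, ?_, ?_⟩
  · exact hS0
  · refine ⟨?_, sorbit β E, fun j => sorbit_mem m β E hv (j+1), ?_⟩
    · rw [norm_inv, inv_lt_one_iff₀]; right; exact hz
    · have hts : ∑' j, Cs (j+1) = S - 1 := hshift.tsum_eq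
      have hrw : ∀ j : ℕ, ((sorbit β E (j+1) : ℝ) : ℂ) * (z⁻¹) ^ (j+1) = Cs (j+1) := by
        intro j
        rw [hCs]
        simp only
        rw [zpow_neg, zpow_natCast, inv_pow]
      rw [show ∑' j : ℕ, ((sorbit β E (j+1) : ℝ) : ℂ) * (z⁻¹) ^ (j+1) = ∑' j, Cs (j+1) from
        tsum_congr hrw, hts, hS0]
      ring
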